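/- arXiv:2605.08358 — 2 statements merged into one kernel-verified Lean document; each statement's English description precedes it below -/
import Mathlib

section
/- Let C, γ > 0, let N, m ∈ ℕ, let q_1,…,q_m be row vectors in ℝ^N, and let X_0 ⪯ X_1 ⪯ … ⪯ X_m be N×N positive semidefinite matrices such that for each t ∈ {1,…,m}, X_t ⪰ q_tᵀq_t and tr(X_t) ≤ C²γ²N. Then there exist real matrices R_0, R_1, …, R_m, each with N columns, such that for every t ∈ {1,…,m}: R_t is obtained from R_{t−1} by appending rows at the bottom, R_tᵀR_t = (1/(C²γ²))·X_t, ‖R_t‖_F ≤ √N, and there exists a row vector ℓ_t (with one coordinate per row of R_t) with ℓ_t·R_t = q_t and ‖ℓ_t‖_2 ≤ Cγ. -/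
open Matrix
open scoped RealInnerProductSpace

private lemma sum_range_mul_split {M : Type*} [AddCommMonoid M] (f : ℕ → M) (a b : ℕ) :
    ∑ i ∈ Finset.range (a * b), f i
      = ∑ s ∈ Finset.range a, ∑ r ∈ Finset.range b, f (s * b + r) := by
  induction a with
  | zero => simp
  | succ a ih =>
      rw [Nat.succ_mul, Finset.sum_range_add, ih, Finset.sum_range_succ]

private lemma exists_mulVec_eq {N : ℕ} {X : Matrix (Fin N) (Fin N) ℝ} {q : Fin N → ℝ}
    (hX : X.PosSemidef) (hdq : (X - vecMulVec q q).PosSemidef) :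
    ∃ u : Fin N → ℝ, X *ᵥ u = q := by
  have hsym : X.toEuclideanLin.IsSymmetric := Matrix.isHermitian_iff_isSymmetric.1 hX.1
  set T := X.toEuclideanLin with hTdef
  set S := LinearMap.range T with hS
  obtain ⟨a, ha, b, hb, hq⟩ := S.exists_add_mem_mem_orthogonal
    ((WithLp.equiv 2 (Fin N → ℝ)).symm q)
  have hTb : T b = 0 := by
    have h0 : (inner ℝ (T b) (T b) : ℝ) = 0 := by
      rw [hsym b (T b), real_inner_comm]
      exact (Submodule.mem_orthogonal S b).1 hb _ (LinearMap.mem_range_self T (T b))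
    exact inner_self_eq_zero.mp h0
  set b' := WithLp.equiv 2 (Fin N → ℝ) b with hb'def
  have hXb : X *ᵥ b' = 0 := by
    have h1 := Matrix.piLp_ofLp_toEuclideanLin X b
    rw [hTb] at h1
    simpa [hb'def] using h1.symm
  have hqb : q ⬝ᵥ b' = 0 := by
    have h1 := hdq.dotProduct_mulVec_nonneg b'
    have h2 : (X - vecMulVec q q) *ᵥ b' = -((q ⬝ᵥ b') • q) := by
      rw [Matrix.sub_mulVec, hXb, zero_sub]
      congr 1
      ext i
      simp only [Matrix.mulVec, Matrix.vecMulVec_apply, dotProduct, Pi.smul_apply,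
        smul_eq_mul, Finset.mul_sum, Finset.sum_mul]
      refine Finset.sum_congr rfl fun j _ => by ring
    rw [h2] at h1
    have h3 : (0:ℝ) ≤ -((q ⬝ᵥ b') * (q ⬝ᵥ b')) := by
      simpa [dotProduct, Finset.mul_sum, Finset.sum_neg_distrib, mul_comm, mul_assoc,
        Finset.sum_mul, mul_left_comm] using h1
    nlinarith [h3]
  have hbz : b = 0 := by
    have hab : (inner ℝ a b : ℝ) = 0 :=
      (Submodule.mem_orthogonal S b).1 hb a ha
    have hqE : (inner ℝ ((WithLp.equiv 2 (Fin N → ℝ)).symm q) b : ℝ) = q ⬝ᵥ b' := by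
      have : b = (WithLp.equiv 2 (Fin N → ℝ)).symm b' := by simp [hb'def]
      rw [this]
      simp [EuclideanSpace.inner_toLp_toLp, dotProduct_comm]
    have h4 : (inner ℝ b b : ℝ) = 0 := by
      have := hqE
      rw [hq, inner_add_left, hab, zero_add] at this
      rw [this, hqb]
    exact inner_self_eq_zero.mp h4
  have haq : (WithLp.equiv 2 (Fin N → ℝ)).symm q ∈ S := by
    rw [hq, hbz, add_zero]; exact ha
  obtain ⟨u', hu'⟩ := haq
  refine ⟨WithLp.equiv 2 (Fin N → ℝ) u', ?_⟩
  have := Matrix.piLp_ofLp_toEuclideanLin X u'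
  rw [hu'] at this
  simpa using this.symm

open scoped MatrixOrder in
noncomputable def Matrix.PosSemidef.sqrt {n : Type*} [Fintype n] [DecidableEq n]
    {A : Matrix n n ℝ} (_ : A.PosSemidef) : Matrix n n ℝ := CFC.sqrt A

open scoped MatrixOrder in
lemma Matrix.PosSemidef.posSemidef_sqrt {n : Type*} [Fintype n] [DecidableEq n]
    {A : Matrix n n ℝ} (hA : A.PosSemidef) : hA.sqrt.PosSemidef :=
  Matrix.nonneg_iff_posSemidef.mp (CFC.sqrt_nonneg A)

open scoped MatrixOrder in
lemma Matrix.PosSemidef.sqrt_mul_self {n : Type*} [Fintype n] [DecidableEq n]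
    {A : Matrix n n ℝ} (hA : A.PosSemidef) : hA.sqrt * hA.sqrt = A :=
  CFC.sqrt_mul_sqrt_self A (Matrix.nonneg_iff_posSemidef.mpr hA)

/-- The matrices `R_t` are encoded by a row count `k t` together with the rows
`Rrow t 0, …, Rrow t (k t - 1)` (each a row vector in `ℝ^N`). -/
theorem stmt5 {N m : ℕ} (C γ : ℝ) (hC : 0 < C) (hγ : 0 < γ)
    (q : ℕ → (Fin N → ℝ)) (X : ℕ → Matrix (Fin N) (Fin N) ℝ)
    (hpsd : ∀ t ≤ m, (X t).PosSemidef)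
    (hmono : ∀ t, 1 ≤ t → t ≤ m → (X t - X (t - 1)).PosSemidef)
    (hdom : ∀ t, 1 ≤ t → t ≤ m → (X t - vecMulVec (q t) (q t)).PosSemidef)
    (htr : ∀ t, 1 ≤ t → t ≤ m → (X t).trace ≤ C ^ 2 * γ ^ 2 * N) :
    ∃ (k : ℕ → ℕ) (Rrow : ℕ → ℕ → (Fin N → ℝ)),
      ∀ t, 1 ≤ t → t ≤ m →
        -- `R_t` is obtained from `R_{t-1}` by appending rows at the bottom
        (k (t - 1) ≤ k t) ∧
        (∀ i < k (t - 1), Rrow t i = Rrow (t - 1) i) ∧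
        -- `R_tᵀ R_t = (1/(C²γ²)) • X_t`
        (∀ j j' : Fin N, ∑ i ∈ Finset.range (k t), Rrow t i j * Rrow t i j' =
          (1 / (C ^ 2 * γ ^ 2)) * X t j j') ∧
        -- `‖R_t‖_F ≤ √N`
        Real.sqrt (∑ i ∈ Finset.range (k t), ∑ j, (Rrow t i j) ^ 2) ≤ Real.sqrt N ∧
        -- there is a row vector `ℓ_t` with `ℓ_t R_t = q_t` and `‖ℓ_t‖₂ ≤ Cγ`
        ∃ ℓ : ℕ → ℝ, (∀ j, ∑ i ∈ Finset.range (k t), ℓ i * Rrow t i j = q t j) ∧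
          Real.sqrt (∑ i ∈ Finset.range (k t), (ℓ i) ^ 2) ≤ C * γ := by
  classical
  have hc2 : (0:ℝ) < C ^ 2 * γ ^ 2 := by positivity
  -- the increments
  set D : ℕ → Matrix (Fin N) (Fin N) ℝ :=
    fun s => if s = 0 then X 0 else X s - X (s - 1) with hDdef
  have hD : ∀ s ≤ m, (D s).PosSemidef := by
    intro s hs
    by_cases h : s = 0
    · simpa [hDdef, h] using hpsd 0 (Nat.zero_le m)
    · simpa [hDdef, h] using hmono s (Nat.one_le_iff_ne_zero.2 h) hs
  -- telescoping
  have htele : ∀ t ≤ m, ∑ s ∈ Finset.range (t + 1), D s = X t := by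
    intro t
    induction t with
    | zero => intro _; simp [hDdef]
    | succ t ih =>
        intro h
        rw [Finset.sum_range_succ, ih (le_trans (Nat.le_succ t) h)]
        simp [hDdef]
  -- square roots of the increments
  set B : ℕ → Matrix (Fin N) (Fin N) ℝ :=
    fun s => if h : (D s).PosSemidef then h.sqrt else 0 with hBdef
  have hBB : ∀ s ≤ m, ∀ j j' : Fin N,
      ∑ r : Fin N, B s r j * B s r j' = D s j j' := by
    intro s hs j j'
    have h := hD s hs
    have h1 : B s = h.sqrt := by simp [hBdef, h]
    have h2 : h.sqrt * h.sqrt = D s := h.sqrt_mul_self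
    have h3 : ∀ r j : Fin N, h.sqrt r j = h.sqrt j r := by
      intro r j
      have := h.posSemidef_sqrt.1
      conv_lhs => rw [← this]
      simp [Matrix.conjTranspose_apply]
    calc ∑ r : Fin N, B s r j * B s r j'
        = ∑ r : Fin N, h.sqrt j r * h.sqrt r j' := by
          simp only [h1]
          exact Finset.sum_congr rfl fun r _ => by rw [h3 r j]
      _ = (h.sqrt * h.sqrt) j j' := by rw [Matrix.mul_apply]
      _ = D s j j' := by rw [h2]
  -- the rows
  set RR : ℕ → (Fin N → ℝ) :=
    fun i => fun j => (1 / (C * γ)) * B (i / N) ⟨i % N, Nat.mod_lt i j.pos⟩ j with hRRdef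
  -- one block of the Gram matrix
  have hblock : ∀ s ≤ m, ∀ j j' : Fin N,
      ∀ r < N, ∀ (hr : r < N),
        RR (s * N + r) j * RR (s * N + r) j'
          = (1 / (C ^ 2 * γ ^ 2)) * (B s ⟨r, hr⟩ j * B s ⟨r, hr⟩ j') := by
    intro s hs j j' r _ hr
    have hN : 0 < N := j.pos
    have hdiv : (s * N + r) / N = s := by
      rw [show s * N + r = r + N * s by ring, Nat.add_mul_div_left _ _ hN,
        Nat.div_eq_of_lt hr, zero_add]
    have hmod : (s * N + r) % N = r := by
      rw [show s * N + r = r + N * s by ring, Nat.add_mul_mod_self_left,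
        Nat.mod_eq_of_lt hr]
    simp only [hRRdef, hdiv, hmod]
    ring
  -- the Gram identity
  have hGram : ∀ t ≤ m, ∀ j j' : Fin N,
      ∑ i ∈ Finset.range ((t + 1) * N), RR i j * RR i j'
        = (1 / (C ^ 2 * γ ^ 2)) * X t j j' := by
    intro t ht j j'
    rw [sum_range_mul_split]
    have hinner : ∀ s ∈ Finset.range (t + 1),
        ∑ r ∈ Finset.range N, RR (s * N + r) j * RR (s * N + r) j'
          = (1 / (C ^ 2 * γ ^ 2)) * D s j j' := by
      intro s hs
      have hsm : s ≤ m := le_trans (Nat.lt_succ_iff.mp (Finset.mem_range.mp hs)) ht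
      have : ∑ r ∈ Finset.range N, RR (s * N + r) j * RR (s * N + r) j'
          = ∑ r : Fin N, (1 / (C ^ 2 * γ ^ 2)) * (B s r j * B s r j') := by
        rw [Finset.sum_range fun r => RR (s * N + r) j * RR (s * N + r) j']
        refine Finset.sum_congr rfl fun r _ => ?_
        rw [hblock s hsm j j' r r.isLt r.isLt]
      rw [this, ← Finset.mul_sum, hBB s hsm j j']
    rw [Finset.sum_congr rfl hinner, ← Finset.mul_sum]
    congr 1
    rw [← htele t ht, Matrix.sum_apply]
  -- conclusion
  refine ⟨fun t => (t + 1) * N, fun _ i => RR i, ?_⟩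
  intro t ht1 htm
  refine ⟨Nat.mul_le_mul_right N (Nat.succ_le_succ (Nat.sub_le t 1)),
    fun i _ => rfl, hGram t htm, ?_, ?_⟩
  · -- Frobenius norm bound
    apply Real.sqrt_le_sqrt
    have hswap : ∑ i ∈ Finset.range ((t + 1) * N), ∑ j, (RR i j) ^ 2
        = ∑ j, ∑ i ∈ Finset.range ((t + 1) * N), RR i j * RR i j := by
      rw [Finset.sum_comm]
      exact Finset.sum_congr rfl fun j _ => Finset.sum_congr rfl fun i _ => sq (RR i j)
    rw [hswap]
    have htrace : ∑ j, ∑ i ∈ Finset.range ((t + 1) * N), RR i j * RR i j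
        = (1 / (C ^ 2 * γ ^ 2)) * (X t).trace := by
      rw [Finset.sum_congr rfl fun j _ => hGram t htm j j, ← Finset.mul_sum]
      congr 1
    rw [htrace]
    calc (1 / (C ^ 2 * γ ^ 2)) * (X t).trace
        ≤ (1 / (C ^ 2 * γ ^ 2)) * (C ^ 2 * γ ^ 2 * N) :=
          mul_le_mul_of_nonneg_left (htr t ht1 htm) (by positivity)
      _ = N := by field_simp
  · -- the linear functional
    obtain ⟨u, hu⟩ := exists_mulVec_eq (hpsd t htm) (hdom t ht1 htm)
    have hXsym : ∀ j j' : Fin N, X t j' j = X t j j' := by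
      intro j j'
      have h := (hpsd t htm).1
      conv_lhs => rw [← h]
      simp [Matrix.conjTranspose_apply]
    have hmv : ∀ j : Fin N, ∑ j', X t j j' * u j' = q t j := by
      intro j
      have := congrFun hu j
      simpa [Matrix.mulVec, dotProduct] using this
    set α : ℝ := u ⬝ᵥ q t with hαdef
    have hα0 : 0 ≤ α := by
      have h0 := (hpsd t htm).dotProduct_mulVec_nonneg u
      rw [hu] at h0
      simpa using h0
    have hα1 : α * α ≤ α := by
      have h0 := (hdom t ht1 htm).dotProduct_mulVec_nonneg u
      have hvmv : vecMulVec (q t) (q t) *ᵥ u = ((q t) ⬝ᵥ u) • (q t) := by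
        ext i
        simp only [Matrix.mulVec, Matrix.vecMulVec_apply, dotProduct, Pi.smul_apply,
          smul_eq_mul, Finset.sum_mul]
        exact Finset.sum_congr rfl fun j _ => by ring
      rw [Matrix.sub_mulVec, hu, hvmv] at h0
      have h1 : (0:ℝ) ≤ u ⬝ᵥ q t - (q t ⬝ᵥ u) * (u ⬝ᵥ q t) := by
        simpa [dotProduct_sub, dotProduct_smul, smul_eq_mul] using h0
      rw [dotProduct_comm (q t) u] at h1
      linarith
    refine ⟨fun i => (C ^ 2 * γ ^ 2) * ∑ j, RR i j * u j, ?_, ?_⟩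
    · intro j
      calc ∑ i ∈ Finset.range ((t + 1) * N), ((C ^ 2 * γ ^ 2) * ∑ j', RR i j' * u j') * RR i j
          = ∑ i ∈ Finset.range ((t + 1) * N), ∑ j',
              (C ^ 2 * γ ^ 2) * (u j' * (RR i j' * RR i j)) := by
            refine Finset.sum_congr rfl fun i _ => ?_
            rw [mul_assoc, Finset.sum_mul, Finset.mul_sum]
            exact Finset.sum_congr rfl fun j' _ => by ring
        _ = ∑ j', (C ^ 2 * γ ^ 2) *
              (u j' * ∑ i ∈ Finset.range ((t + 1) * N), RR i j' * RR i j) := by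
            rw [Finset.sum_comm]
            exact Finset.sum_congr rfl fun j' _ => by
              rw [← Finset.mul_sum, ← Finset.mul_sum]
        _ = ∑ j', (C ^ 2 * γ ^ 2) * (u j' * ((1 / (C ^ 2 * γ ^ 2)) * X t j' j)) := by
            exact Finset.sum_congr rfl fun j' _ => by rw [hGram t htm j' j]
        _ = ∑ j', X t j j' * u j' := by
            refine Finset.sum_congr rfl fun j' _ => ?_
            rw [hXsym j j']
            field_simp
        _ = q t j := hmv j
    · have hsum : ∑ i ∈ Finset.range ((t + 1) * N),
          ((C ^ 2 * γ ^ 2) * ∑ j, RR i j * u j) ^ 2 = (C ^ 2 * γ ^ 2) * α := by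
        calc ∑ i ∈ Finset.range ((t + 1) * N), ((C ^ 2 * γ ^ 2) * ∑ j, RR i j * u j) ^ 2
            = ∑ i ∈ Finset.range ((t + 1) * N), ∑ j, ∑ j',
                ((C ^ 2 * γ ^ 2) * (C ^ 2 * γ ^ 2)) *
                  (u j * u j' * (RR i j * RR i j')) := by
              refine Finset.sum_congr rfl fun i _ => ?_
              rw [show ((C ^ 2 * γ ^ 2) * ∑ j, RR i j * u j) ^ 2
                  = ((C ^ 2 * γ ^ 2) * (C ^ 2 * γ ^ 2)) *
                    ((∑ j, RR i j * u j) * (∑ j', RR i j' * u j')) from by ring,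
                Finset.sum_mul_sum, Finset.mul_sum]
              refine Finset.sum_congr rfl fun j _ => ?_
              rw [Finset.mul_sum]
              exact Finset.sum_congr rfl fun j' _ => by ring
          _ = ∑ j, ∑ j', ((C ^ 2 * γ ^ 2) * (C ^ 2 * γ ^ 2)) * (u j * u j') *
                ∑ i ∈ Finset.range ((t + 1) * N), RR i j * RR i j' := by
              rw [Finset.sum_comm]
              refine Finset.sum_congr rfl fun j _ => ?_
              rw [Finset.sum_comm]
              refine Finset.sum_congr rfl fun j' _ => ?_
              rw [Finset.mul_sum]
              exact Finset.sum_congr rfl fun i _ => by ring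
          _ = ∑ j, ∑ j', (C ^ 2 * γ ^ 2) * (u j * (X t j j' * u j')) := by
              refine Finset.sum_congr rfl fun j _ => Finset.sum_congr rfl fun j' _ => ?_
              rw [hGram t htm j j']
              field_simp
          _ = (C ^ 2 * γ ^ 2) * α := by
              rw [hαdef]
              simp only [dotProduct]
              rw [Finset.mul_sum]
              refine Finset.sum_congr rfl fun j _ => ?_
              rw [← Finset.mul_sum, ← Finset.mul_sum, hmv j]
      rw [hsum]
      have hαle : α ≤ 1 := by nlinarith
      have hle : (C ^ 2 * γ ^ 2) * α ≤ (C * γ) ^ 2 := by nlinarith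
      calc Real.sqrt ((C ^ 2 * γ ^ 2) * α) ≤ Real.sqrt ((C * γ) ^ 2) :=
            Real.sqrt_le_sqrt hle
        _ = C * γ := Real.sqrt_sq (by positivity)
end

section
/- Let α ∈ (0,1), let Q ∈ [0,1]^{m×N} be a matrix, let w be a positive integer with w ≤ N, and let x ∈ [0,1]^N be a vector with at most w nonzero coordinates and with ‖x‖_1 = w. Suppose hdisc*(Q, w) ≤ αw/4. Then there exists a Boolean vector y ∈ {0,1}^N such that, writing s := ‖y‖_1, we have 1 ≤ s ≤ 5·hdisc*(Q, w)/α and ‖Q·(x/w) − Q·(y/s)‖_∞ ≤ α. -/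
open Matrix

/-- The discrepancy of the columns of `Q` indexed by `S`: the minimum over ±1 colorings
of `S` of `‖Q_S x‖_∞`. -/
noncomputable def colDisc {m : ℕ} {β : Type*} [Fintype β] (Q : Matrix (Fin m) β ℝ)
    (S : Finset β) : ℝ :=
  sInf { v : ℝ | ∃ x : β → ℝ, (∀ j ∈ S, x j = 1 ∨ x j = -1) ∧
    v = ⨆ i, |∑ j ∈ S, Q i j * x j| }

/-- The restricted hereditary discrepancy `hdisc(Q, w)`. -/
noncomputable def hdisc {m : ℕ} {β : Type*} [Fintype β] (Q : Matrix (Fin m) β ℝ)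
    (w : ℕ) : ℝ :=
  sSup { v : ℝ | ∃ S : Finset β, S.card ≤ w ∧ v = colDisc Q S }

/-- `Q*`: the matrix `Q` with an all-ones row appended. -/
noncomputable def starMatrix {m : ℕ} {β : Type*} [Fintype β] (Q : Matrix (Fin m) β ℝ) :
    Matrix (Fin (m + 1)) β ℝ :=
  Matrix.of fun i j => if h : (i : ℕ) < m then Q ⟨i, h⟩ j else 1

/-- The modified restricted hereditary discrepancy `hdisc*(Q, w)`. -/
noncomputable def hdiscStar {m : ℕ} {β : Type*} [Fintype β] (Q : Matrix (Fin m) β ℝ)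
    (w : ℕ) : ℝ :=
  hdisc (starMatrix Q) w

section Aux
variable {m N : ℕ}

lemma le_iSup_fin {k : ℕ} (f : Fin (k+1) → ℝ) (i : Fin (k+1)) : f i ≤ ⨆ i, f i :=
  le_ciSup (Set.Finite.bddAbove (Set.finite_range f)) i

lemma colDisc_set_eq (Q : Matrix (Fin m) (Fin N) ℝ) (S : Finset (Fin N)) :
    { v : ℝ | ∃ x : Fin N → ℝ, (∀ j ∈ S, x j = 1 ∨ x j = -1) ∧
      v = ⨆ i, |∑ j ∈ S, Q i j * x j| } =
    Set.range (fun b : Fin N → Bool =>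
      ⨆ i, |∑ j ∈ S, Q i j * (if b j then (1:ℝ) else -1)|) := by
  classical
  ext v
  constructor
  · rintro ⟨x, hx, rfl⟩
    refine ⟨fun j => if x j = 1 then true else false, ?_⟩
    show (⨆ i, |∑ j ∈ S, Q i j * _|) = _
    refine congrArg _ (funext fun i => congrArg _ (Finset.sum_congr rfl fun j hj => ?_))
    rcases hx j hj with h | h <;> simp [h, show ¬((-1:ℝ) = 1) by norm_num]
  · rintro ⟨b, rfl⟩
    exact ⟨fun j => if b j then (1:ℝ) else -1,
      fun j _ => by by_cases h : b j <;> simp [h], rfl⟩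

lemma colDisc_mem (Q : Matrix (Fin m) (Fin N) ℝ) (S : Finset (Fin N)) :
    colDisc Q S ∈ { v : ℝ | ∃ x : Fin N → ℝ, (∀ j ∈ S, x j = 1 ∨ x j = -1) ∧
      v = ⨆ i, |∑ j ∈ S, Q i j * x j| } := by
  classical
  set F := fun b : Fin N → Bool =>
    ⨆ i, |∑ j ∈ S, Q i j * (if b j then (1:ℝ) else -1)| with hF
  have h := (Set.range_nonempty F).csInf_mem (Set.finite_range F)
  rw [hF, ← colDisc_set_eq Q S] at h
  exact h

lemma exists_coloring (Q : Matrix (Fin (m+1)) (Fin N) ℝ) (S : Finset (Fin N)) :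
    ∃ χ : Fin N → ℝ, (∀ j ∈ S, χ j = 1 ∨ χ j = -1) ∧
      ∀ i, |∑ j ∈ S, Q i j * χ j| ≤ colDisc Q S := by
  obtain ⟨x, hx, hv⟩ := colDisc_mem Q S
  refine ⟨x, hx, fun i => ?_⟩
  rw [hv]
  exact le_iSup_fin (fun i => |∑ j ∈ S, Q i j * x j|) i

lemma bddBelow_colDisc_set (Q : Matrix (Fin (m+1)) (Fin N) ℝ) (S : Finset (Fin N)) :
    BddBelow { v : ℝ | ∃ x : Fin N → ℝ, (∀ j ∈ S, x j = 1 ∨ x j = -1) ∧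
      v = ⨆ i, |∑ j ∈ S, Q i j * x j| } := by
  refine ⟨0, ?_⟩
  rintro v ⟨x, hx, rfl⟩
  exact le_trans (abs_nonneg _) (le_iSup_fin (fun i => |∑ j ∈ S, Q i j * x j|) 0)

lemma colDisc_nonneg (Q : Matrix (Fin (m+1)) (Fin N) ℝ) (S : Finset (Fin N)) :
    0 ≤ colDisc Q S := by
  obtain ⟨x, hx, hv⟩ := colDisc_mem Q S
  rw [hv]
  exact le_trans (abs_nonneg _) (le_iSup_fin (fun i => |∑ j ∈ S, Q i j * x j|) 0)

lemma colDisc_le (Q : Matrix (Fin (m+1)) (Fin N) ℝ) (hb : ∀ i j, |Q i j| ≤ 1)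
    (S : Finset (Fin N)) : colDisc Q S ≤ N := by
  have hm : (⨆ i, |∑ j ∈ S, Q i j * (1:ℝ)|) ∈
      { v : ℝ | ∃ x : Fin N → ℝ, (∀ j ∈ S, x j = 1 ∨ x j = -1) ∧
        v = ⨆ i, |∑ j ∈ S, Q i j * x j| } :=
    ⟨fun _ => (1:ℝ), fun j _ => Or.inl rfl, rfl⟩
  refine le_trans (csInf_le (bddBelow_colDisc_set Q S) hm) (ciSup_le fun i => ?_)
  calc |∑ j ∈ S, Q i j * (1:ℝ)| ≤ ∑ j ∈ S, |Q i j * (1:ℝ)| := Finset.abs_sum_le_sum_abs _ _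
    _ ≤ ∑ j ∈ S, 1 := Finset.sum_le_sum fun j _ => by rw [mul_one]; exact hb i j
    _ = S.card := by simp
    _ ≤ (N:ℝ) := by
        have h := Finset.card_le_univ S
        rw [Fintype.card_fin] at h
        exact_mod_cast h

lemma bddAbove_hdisc (Q : Matrix (Fin (m+1)) (Fin N) ℝ) (hb : ∀ i j, |Q i j| ≤ 1) (w : ℕ) :
    BddAbove { v : ℝ | ∃ S : Finset (Fin N), S.card ≤ w ∧ v = colDisc Q S } := by
  refine ⟨N, ?_⟩
  rintro v ⟨S, _, rfl⟩
  exact colDisc_le Q hb S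

lemma colDisc_le_hdisc (Q : Matrix (Fin (m+1)) (Fin N) ℝ) (hb : ∀ i j, |Q i j| ≤ 1)
    {S : Finset (Fin N)} {w : ℕ} (hS : S.card ≤ w) : colDisc Q S ≤ hdisc Q w :=
  le_csSup (bddAbove_hdisc Q hb w) ⟨S, hS, rfl⟩

end Aux

section Halve
variable {m N : ℕ}

lemma halving (Q : Matrix (Fin (m+1)) (Fin N) ℝ) (hb : ∀ i j, |Q i j| ≤ 1)
    {w : ℕ} (S : Finset (Fin N)) (hS : S.card ≤ w) :
    ∃ S' : Finset (Fin N), S' ⊆ S ∧ 2 * S'.card ≤ S.card ∧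
      ∀ i, |(∑ j ∈ S', Q i j) - (∑ j ∈ S, Q i j) / 2| ≤ hdisc Q w / 2 := by
  classical
  obtain ⟨χ, hχ, hbnd⟩ := exists_coloring Q S
  have hD : colDisc Q S ≤ hdisc Q w := colDisc_le_hdisc Q hb hS
  set P := S.filter (fun j => χ j = 1) with hP
  set M := S.filter (fun j => ¬ χ j = 1) with hM
  have hPS : P ⊆ S := Finset.filter_subset _ _
  have hMS : M ⊆ S := Finset.filter_subset _ _
  have hcard : P.card + M.card = S.card := Finset.card_filter_add_card_filter_not _
  have hsplit : ∀ i, (∑ j ∈ P, Q i j) + (∑ j ∈ M, Q i j) = ∑ j ∈ S, Q i j :=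
    fun i => Finset.sum_filter_add_sum_filter_not S _ _
  have hkey : ∀ i, (∑ j ∈ P, Q i j) - (∑ j ∈ M, Q i j) = ∑ j ∈ S, Q i j * χ j := by
    intro i
    rw [← Finset.sum_filter_add_sum_filter_not S (fun j => χ j = 1) (fun j => Q i j * χ j)]
    rw [show (∑ j ∈ S.filter (fun j => χ j = 1), Q i j * χ j) = ∑ j ∈ P, Q i j from
      Finset.sum_congr rfl fun j hj => by
        rw [(Finset.mem_filter.mp hj).2, mul_one]]
    rw [show (∑ j ∈ S.filter (fun j => ¬ χ j = 1), Q i j * χ j) = ∑ j ∈ M, -Q i j from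
      Finset.sum_congr rfl fun j hj => by
        have h2 := Finset.mem_filter.mp hj
        rcases hχ j h2.1 with h | h
        · exact absurd h h2.2
        · rw [h]; ring]
    rw [Finset.sum_neg_distrib]
    ring
  have hbound : ∀ i, |∑ j ∈ S, Q i j * χ j| ≤ hdisc Q w := fun i => (hbnd i).trans hD
  by_cases hc : 2 * P.card ≤ S.card
  · refine ⟨P, hPS, hc, fun i => ?_⟩
    have h1 := hsplit i
    have h2 := hkey i
    have h3 := (abs_le.mp (hbound i))
    rw [abs_le]
    constructor <;> linarith
  · refine ⟨M, hMS, by omega, fun i => ?_⟩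
    have h1 := hsplit i
    have h2 := hkey i
    have h3 := (abs_le.mp (hbound i))
    rw [abs_le]
    constructor <;> linarith

lemma iterate (Q : Matrix (Fin (m+1)) (Fin N) ℝ) (hb : ∀ i j, |Q i j| ≤ 1)
    {w : ℕ} (S : Finset (Fin N)) (hSw : S.card = w) (t : ℕ) :
    ∃ St : Finset (Fin N), St ⊆ S ∧ (St.card : ℝ) ≤ (w : ℝ) / 2 ^ t ∧
      ∀ i, |(∑ j ∈ St, Q i j) - (∑ j ∈ S, Q i j) / 2 ^ t| ≤ hdisc Q w * (1 - 1 / 2 ^ t) := by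
  induction t with
  | zero =>
    refine ⟨S, Finset.Subset.refl S, by simp [hSw], fun i => by simp⟩
  | succ t ih =>
    obtain ⟨St, hsub, hcard, hbnd⟩ := ih
    have h3 : (0:ℝ) < 2 ^ t := by positivity
    have hcard' : St.card ≤ w := by
      have h2 : (St.card : ℝ) ≤ (w : ℝ) :=
        hcard.trans (div_le_self (Nat.cast_nonneg w) (one_le_pow₀ one_le_two))
      exact_mod_cast h2
    obtain ⟨S', hsub', hc', hb'⟩ := halving Q hb St hcard'
    refine ⟨S', hsub'.trans hsub, ?_, fun i => ?_⟩
    · have hcc : (2 * S'.card : ℝ) ≤ St.card := by exact_mod_cast hc'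
      rw [pow_succ, le_div_iff₀ (by positivity)]
      rw [le_div_iff₀ h3] at hcard
      nlinarith [mul_le_mul_of_nonneg_right hcc h3.le]
    · have h1 := hb' i
      have h2 := hbnd i
      have key : (∑ j ∈ S', Q i j) - (∑ j ∈ S, Q i j) / 2 ^ (t+1)
          = ((∑ j ∈ S', Q i j) - (∑ j ∈ St, Q i j) / 2)
            + ((∑ j ∈ St, Q i j) - (∑ j ∈ S, Q i j) / 2 ^ t) / 2 := by
        rw [pow_succ]
        field_simp
        ring
      rw [key]
      calc |_ + _| ≤ |(∑ j ∈ S', Q i j) - (∑ j ∈ St, Q i j) / 2|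
            + |((∑ j ∈ St, Q i j) - (∑ j ∈ S, Q i j) / 2 ^ t) / 2| := abs_add_le _ _
        _ ≤ hdisc Q w / 2 + hdisc Q w * (1 - 1 / 2 ^ t) / 2 := by
            refine add_le_add h1 ?_
            rw [abs_div, abs_two]
            linarith [h2]
        _ = hdisc Q w * (1 - 1 / 2 ^ (t+1)) := by
            rw [pow_succ]
            field_simp
            ring

end Halve

set_option maxHeartbeats 1600000 in
theorem stmt15 {m N : ℕ} (α : ℝ) (hα : α ∈ Set.Ioo (0 : ℝ) 1)
    (Q : Matrix (Fin m) (Fin N) ℝ) (hQ : ∀ i j, Q i j ∈ Set.Icc (0 : ℝ) 1)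
    (w : ℕ) (hw1 : 1 ≤ w) (hwN : w ≤ N)
    (x : Fin N → ℝ) (hx : ∀ j, x j ∈ Set.Icc (0 : ℝ) 1)
    (hx0 : ∃ S : Finset (Fin N), S.card ≤ w ∧ ∀ j ∉ S, x j = 0)
    (hx1 : ∑ j, |x j| = w)
    (hH : hdiscStar Q w ≤ α * w / 4) :
    ∃ y : Fin N → ℝ, (∀ j, y j = 0 ∨ y j = 1) ∧
      1 ≤ ∑ j, y j ∧ (∑ j, y j) ≤ 5 * hdiscStar Q w / α ∧
      ∀ i, |(∑ j, Q i j * (x j / w)) - ∑ j, Q i j * (y j / (∑ j', y j'))| ≤ α := by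
  classical
  obtain ⟨hα0, hα1⟩ := hα
  set Qs := starMatrix Q with hQsdef
  set D := hdiscStar Q w with hDdef
  have hDeq : D = hdisc Qs w := rfl
  clear_value Qs D
  -- entries of Qs
  have hQslt : ∀ (i : Fin (m+1)) (h : (i:ℕ) < m) (j : Fin N), Qs i j = Q ⟨i, h⟩ j := by
    intro i h j
    simp [hQsdef, starMatrix, h]
  have hQslast : ∀ (i : Fin (m+1)) (h : ¬ (i:ℕ) < m) (j : Fin N), Qs i j = 1 := by
    intro i h j
    simp [hQsdef, starMatrix, h]
  have hQs01 : ∀ (i : Fin (m+1)) (j : Fin N), 0 ≤ Qs i j ∧ Qs i j ≤ 1 := by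
    intro i j
    by_cases h : (i:ℕ) < m
    · rw [hQslt i h j]; exact ⟨(hQ _ j).1, (hQ _ j).2⟩
    · rw [hQslast i h j]; norm_num
  have hQsabs : ∀ (i : Fin (m+1)) (j : Fin N), |Qs i j| ≤ 1 := by
    intro i j
    rw [abs_le]
    exact ⟨by linarith [(hQs01 i j).1], (hQs01 i j).2⟩
  -- D ≥ 1
  have hNpos : 0 < N := lt_of_lt_of_le hw1 hwN
  have hD1 : (1:ℝ) ≤ D := by
    set j0 : Fin N := ⟨0, hNpos⟩
    have h1 : (1:ℝ) ≤ colDisc Qs {j0} := by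
      obtain ⟨χ, hχ, hv⟩ := colDisc_mem Qs {j0}
      rw [hv]
      have hlast : ¬ ((Fin.last m : ℕ) < m) := by simp
      have : (1:ℝ) ≤ |∑ j ∈ {j0}, Qs (Fin.last m) j * χ j| := by
        rw [Finset.sum_singleton, hQslast _ hlast, one_mul]
        rcases hχ j0 (Finset.mem_singleton_self j0) with h | h <;> rw [h] <;> norm_num
      exact this.trans (le_iSup_fin (fun i => |∑ j ∈ {j0}, Qs i j * χ j|) (Fin.last m))
    rw [hDeq]
    exact h1.trans (colDisc_le_hdisc Qs hQsabs (by simpa using hw1))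
  have hD0 : (0:ℝ) < D := lt_of_lt_of_le one_pos hD1
  -- x is the indicator of S0, card S0 = w
  obtain ⟨S0, hS0w, hS0supp⟩ := hx0
  have hsum : ∑ j ∈ S0, x j = w := by
    have h1 : ∑ j, |x j| = ∑ j, x j :=
      Finset.sum_congr rfl fun j _ => abs_of_nonneg (hx j).1
    have h2 : ∑ j ∈ S0, x j = ∑ j, x j :=
      Finset.sum_subset (Finset.subset_univ S0) (fun j _ hj => hS0supp j hj)
    rw [h2, ← h1, hx1]
  have hterm : ∀ j ∈ S0, (0:ℝ) ≤ 1 - x j := fun j _ => by linarith [(hx j).2]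
  have hzero : ∑ j ∈ S0, ((1:ℝ) - x j) = 0 := by
    have hnn : 0 ≤ ∑ j ∈ S0, ((1:ℝ) - x j) := Finset.sum_nonneg hterm
    have hcc : (S0.card:ℝ) ≤ w := Nat.cast_le.mpr hS0w
    have hsum2 : ∑ j ∈ S0, ((1:ℝ) - x j) = S0.card - w := by
      rw [Finset.sum_sub_distrib, hsum, Finset.sum_const, nsmul_eq_mul, mul_one]
    linarith
  have hone : ∀ j ∈ S0, x j = 1 := by
    intro j hj
    have := (Finset.sum_eq_zero_iff_of_nonneg hterm).mp hzero j hj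
    linarith
  have hcardS0 : S0.card = w := by
    have hsum2 : ∑ j ∈ S0, ((1:ℝ) - x j) = S0.card - w := by
      rw [Finset.sum_sub_distrib, hsum, Finset.sum_const, nsmul_eq_mul, mul_one]
    have : (S0.card:ℝ) = w := by rw [hsum2] at hzero; linarith
    exact_mod_cast this
  have hxind : ∀ j, x j = if j ∈ S0 then (1:ℝ) else 0 := by
    intro j
    by_cases hj : j ∈ S0
    · simp [hj, hone j hj]
    · simp [hj, hS0supp j hj]
  -- choose T
  have hex : ∃ t : ℕ, (w:ℝ)/2^t ≤ 4*D/α := by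
    refine ⟨w, ?_⟩
    have h1 : (w:ℝ)/2^w ≤ 1 := by
      rw [div_le_one (by positivity)]
      exact_mod_cast (Nat.lt_two_pow_self (n := w)).le
    have h2 : (1:ℝ) ≤ 4*D/α := by
      rw [le_div_iff₀ hα0]
      nlinarith
    linarith
  obtain ⟨T, hT, hTlow⟩ : ∃ T : ℕ, (w:ℝ)/2^T ≤ 4*D/α ∧ 2*D/α ≤ (w:ℝ)/2^T := by
    refine ⟨Nat.find hex, Nat.find_spec hex, ?_⟩
    rcases Nat.eq_zero_or_pos (Nat.find hex) with h0 | hTpos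
    · rw [h0]
      simp only [pow_zero, div_one]
      rw [div_le_iff₀ hα0]
      nlinarith [hH]
    · have hmin := Nat.find_min hex (show Nat.find hex - 1 < Nat.find hex by omega)
      push_neg at hmin
      have he : Nat.find hex = (Nat.find hex - 1) + 1 := by omega
      rw [he, pow_succ]
      have h3 : (0:ℝ) < 2 ^ (Nat.find hex - 1) := by positivity
      have hm2 : 4*D/α ≤ (w:ℝ)/2^(Nat.find hex - 1) := hmin.le
      rw [div_le_div_iff₀ hα0 h3] at hm2
      rw [div_le_div_iff₀ hα0 (by positivity)]
      linarith
  -- iterate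
  obtain ⟨ST, hsubT, hcardT, hbndT⟩ := iterate Qs hQsabs S0 hcardS0 T
  set b : ℝ := (w:ℝ)/2^T with hbdef
  clear_value b
  have hbpos : 0 < b := by
    have : (0:ℝ) < 2*D/α := by positivity
    linarith
  have h2T : (0:ℝ) < 2^T := by positivity
  -- row bounds with slack D
  have hrow : ∀ i : Fin (m+1),
      |(∑ j ∈ ST, Qs i j) - (∑ j ∈ S0, Qs i j) / 2 ^ T| ≤ D := by
    intro i
    refine (hbndT i).trans ?_
    rw [← hDeq]
    have hu : 0 < 1/(2:ℝ)^T := by positivity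
    nlinarith
  -- the ones row
  set s : ℝ := (ST.card : ℝ) with hsdef
  clear_value s
  have hlast : ¬ ((Fin.last m : ℕ) < m) := by simp
  have hsums : ∑ j ∈ ST, Qs (Fin.last m) j = s := by
    rw [Finset.sum_congr rfl fun j _ => hQslast _ hlast j, Finset.sum_const, nsmul_eq_mul,
      mul_one, hsdef]
  have hsumw : ∑ j ∈ S0, Qs (Fin.last m) j = (w:ℝ) := by
    rw [Finset.sum_congr rfl fun j _ => hQslast _ hlast j, Finset.sum_const, nsmul_eq_mul,
      mul_one, hcardS0]
  have hsb : |s - b| ≤ D := by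
    have := hrow (Fin.last m)
    rwa [hsums, hsumw, ← hbdef] at this
  have hsb' := abs_le.mp hsb
  -- size bounds on s
  have h2Dab : 2*D ≤ α*b := by
    rw [div_le_iff₀ hα0] at hTlow
    linarith
  have hbα : α*b ≤ 4*D := by
    rw [le_div_iff₀ hα0] at hT
    linarith
  have hs1 : (1:ℝ) ≤ s := by
    nlinarith [hsb'.1, h2Dab, hD1, hα0.le, hα1.le,
      mul_le_mul_of_nonneg_left hD1 (by linarith : (0:ℝ) ≤ 2 - α)]
  have hspos : (0:ℝ) < s := by linarith
  have hshigh : s ≤ 5*D/α := by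
    rw [le_div_iff₀ hα0]
    have h1 : s ≤ b + D := by linarith [hsb'.2]
    have p1 : s*α ≤ (b+D)*α := mul_le_mul_of_nonneg_right h1 hα0.le
    have p2 : D*α ≤ D := mul_le_of_le_one_right hD0.le hα1.le
    linarith [p1, p2, hbα]
  -- the vector y
  refine ⟨fun j => if j ∈ ST then (1:ℝ) else 0, fun j => by by_cases h : j ∈ ST <;> simp [h],
    ?_, ?_, ?_⟩
  · rw [show (∑ j, if j ∈ ST then (1:ℝ) else 0) = s by
      rw [Finset.sum_ite_mem, Finset.univ_inter, Finset.sum_const, nsmul_eq_mul, mul_one,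
        ← hsdef]]
    exact hs1
  · rw [show (∑ j, if j ∈ ST then (1:ℝ) else 0) = s by
      rw [Finset.sum_ite_mem, Finset.univ_inter, Finset.sum_const, nsmul_eq_mul, mul_one,
        ← hsdef]]
    exact hshigh
  · intro i
    have hysum : (∑ j, if j ∈ ST then (1:ℝ) else 0) = s := by
      rw [Finset.sum_ite_mem, Finset.univ_inter, Finset.sum_const, nsmul_eq_mul, mul_one,
        ← hsdef]
    rw [hysum]
    -- rewrite the two averages
    have hwpos : (0:ℝ) < w := by exact_mod_cast hw1
    have e1 : ∑ j, Q i j * (x j / (w:ℝ)) = (∑ j ∈ S0, Q i j) / (w:ℝ) := by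
      rw [Finset.sum_div]
      rw [show (∑ j, Q i j * (x j / (w:ℝ))) = ∑ j, (if j ∈ S0 then Q i j / (w:ℝ) else 0) from
        Finset.sum_congr rfl fun j _ => by
          rw [hxind j]; by_cases h : j ∈ S0 <;> simp [h] <;> ring]
      rw [Finset.sum_ite_mem, Finset.univ_inter]
    have e2 : ∑ j, Q i j * ((if j ∈ ST then (1:ℝ) else 0) / s) = (∑ j ∈ ST, Q i j) / s := by
      rw [Finset.sum_div]
      rw [show (∑ j, Q i j * ((if j ∈ ST then (1:ℝ) else 0) / s))
          = ∑ j, (if j ∈ ST then Q i j / s else 0) from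
        Finset.sum_congr rfl fun j _ => by by_cases h : j ∈ ST <;> simp [h] <;> ring]
      rw [Finset.sum_ite_mem, Finset.univ_inter]
    rw [e1, e2]
    -- row data
    have hilt : ((Fin.castSucc i : Fin (m+1)) : ℕ) < m := by simp [i.isLt]
    have hii : (⟨((Fin.castSucc i : Fin (m+1)) : ℕ), hilt⟩ : Fin m) = i := by
      apply Fin.ext
      simp
    have hQQ : ∀ j, Qs (Fin.castSucc i) j = Q i j := by
      intro j
      rw [hQslt _ hilt j, hii]
    set a : ℝ := ∑ j ∈ ST, Q i j with hadef
    set c0 : ℝ := ∑ j ∈ S0, Q i j with hc0def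
    clear_value a c0
    have ha : |a - c0 / 2^T| ≤ D := by
      have := hrow (Fin.castSucc i)
      rwa [Finset.sum_congr rfl fun j _ => hQQ j, Finset.sum_congr rfl fun j _ => hQQ j,
        ← hadef, ← hc0def] at this
    have ha' := abs_le.mp ha
    set a0 : ℝ := c0 / 2^T with ha0def
    clear_value a0
    have hC : c0 / (w:ℝ) = a0 / b := by
      rw [ha0def, hbdef]
      field_simp
    rw [hC]
    -- bounds on a
    have haa : 0 ≤ a := by
      rw [hadef]
      exact Finset.sum_nonneg fun j _ => (hQ i j).1
    have has : a ≤ s := by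
      rw [hadef, hsdef]
      calc ∑ j ∈ ST, Q i j ≤ ∑ j ∈ ST, 1 := Finset.sum_le_sum fun j _ => (hQ i j).2
        _ = (ST.card : ℝ) := by rw [Finset.sum_const, nsmul_eq_mul, mul_one]
    clear e1 e2 hC hysum hQQ hii ha hbndT hrow hex hxind hzero hterm hone hsums hsumw
    clear hQslt hQslast hQs01 hQsabs hsb hsum hx1 hx hS0supp hQ hsubT hcardT hH
    -- final computation
    have hDs : 2*D*s ≤ α*b*s := mul_le_mul_of_nonneg_right h2Dab hspos.le
    have hAD : a*D ≤ s*D := mul_le_mul_of_nonneg_right has hD0.le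
    have upper : a0*s - b*a ≤ α*(b*s) := by
      have u1 : a0 ≤ a + D := by linarith [ha'.1]
      have u2 : a0*s ≤ (a + D)*s := mul_le_mul_of_nonneg_right u1 hspos.le
      have u4 : a*(s-b) ≤ a*D := mul_le_mul_of_nonneg_left hsb'.2 haa
      linarith
    have lower : b*a - a0*s ≤ α*(b*s) := by
      have l1 : a - a0 ≤ D := ha'.2
      have l2 : a*(b-s) ≤ a*D := mul_le_mul_of_nonneg_left (by linarith [hsb'.1]) haa
      have l4 : (a-a0)*s ≤ D*s := mul_le_mul_of_nonneg_right l1 hspos.le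
      linarith
    rw [div_sub_div _ _ (ne_of_gt hbpos) (ne_of_gt hspos), abs_div,
      abs_of_pos (mul_pos hbpos hspos), div_le_iff₀ (mul_pos hbpos hspos), abs_le]
    constructor <;> linarith [upper, lower]
end
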